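/- Let (A, μ, R, d) be a modified Rota-Baxter AssDer pair of weight κ. Define the commutator bracket [a,b]_C = μ(a,b) - μ(b,a). Then (A, [-,-]_C, R, d) is a modified Rota-Baxter LieDer pair of weight κ: (A, [-,-]_C) is a Lie algebra, R satisfies [R(a),R(b)]_C = R([R(a),b]_C + [a,R(b)]_C) + κ [a,b]_C, d is a derivation of the bracket, and R ∘ d = d ∘ R. -/

import Mathlib

/-- The commutator bracket of a modified Rota-Baxter AssDer pair of weight `κ`
gives a modified Rota-Baxter LieDer pair of weight `κ`. -/
theorem stmt_3 {K A : Type*} [Field K] [AddCommGroup A] [Module K A] (κ : K)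
    (μ : A →ₗ[K] A →ₗ[K] A) (R d : A →ₗ[K] A)
    (hassoc : ∀ a b c : A, μ (μ a b) c = μ a (μ b c))
    (hRB : ∀ a b : A, μ (R a) (R b) = R (μ (R a) b + μ a (R b)) + κ • μ a b)
    (hder : ∀ a b : A, d (μ a b) = μ (d a) b + μ a (d b))
    (hcom : ∀ a : A, R (d a) = d (R a)) :
    ∀ br : A → A → A, (br = fun a b => μ a b - μ b a) →
      (∀ a : A, br a a = 0) ∧
      (∀ a b : A, br a b = - br b a) ∧
      (∀ a b c : A, br (br a b) c + br (br b c) a + br (br c a) b = 0) ∧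
      (∀ a b : A, br (R a) (R b) = R (br (R a) b + br a (R b)) + κ • br a b) ∧
      (∀ a b : A, d (br a b) = br (d a) b + br a (d b)) ∧
      (∀ a : A, R (d a) = d (R a)) := by
  intro br hbr
  subst hbr
  refine ⟨fun a => by simp, fun a b => by beta_reduce; abel, fun a b c => ?_, fun a b => ?_, fun a b => ?_,
    hcom⟩
  · simp only [map_sub, LinearMap.sub_apply, hassoc]
    abel
  · simp only [map_sub, map_add, LinearMap.sub_apply, hRB, smul_sub]
    abel
  · simp only [map_sub, hder]
    abel
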